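/- Let M be an n×n Metzler real matrix each of whose columns sums to zero. Then every complex eigenvalue λ of M satisfies Re(λ) ≤ 0, and Re(λ) = 0 implies λ = 0. -/

import Mathlib

open Matrix

/-- A square real matrix is Metzler if all its off-diagonal entries are nonnegative. -/
def Matrix.IsMetzler {n : Type*} (M : Matrix n n ℝ) : Prop :=
  ∀ i j, i ≠ j → 0 ≤ M i j

lemma spectrum_transpose_mem {n : Type*} [Fintype n] [DecidableEq n]
    (A : Matrix n n ℂ) {z : ℂ} (hz : z ∈ spectrum ℂ A) : z ∈ spectrum ℂ Aᵀ := by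
  rw [spectrum.mem_iff] at hz ⊢
  intro h
  apply hz
  have : (algebraMap ℂ (Matrix n n ℂ) z - Aᵀ)ᵀ = algebraMap ℂ (Matrix n n ℂ) z - A := by
    ext i j
    simp [Matrix.algebraMap_eq_diagonal, Matrix.transpose_apply, Matrix.diagonal,
      Matrix.sub_apply]
    by_cases hij : i = j <;> simp [hij, eq_comm]
  rw [← this]
  exact (Matrix.isUnit_transpose _).mpr h

/-- every complex eigenvalue `λ` of a Metzler matrix whose columns sum to
zero satisfies `Re λ ≤ 0`, and `Re λ = 0` implies `z = 0`. -/
theorem metzler_colSumZero_spectrum {n : Type*} [Fintype n] [DecidableEq n]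
    (M : Matrix n n ℝ) (hM : M.IsMetzler) (hcol : ∀ j, ∑ i, M i j = 0) :
    ∀ z ∈ spectrum ℂ (M.map (algebraMap ℝ ℂ)), z.re ≤ 0 ∧ (z.re = 0 → z = 0) := by
  intro z hz
  -- move to the transpose
  have hzT : z ∈ spectrum ℂ ((M.map (algebraMap ℝ ℂ))ᵀ) := spectrum_transpose_mem _ hz
  have heig : Module.End.HasEigenvalue (Matrix.toLin' ((M.map (algebraMap ℝ ℂ))ᵀ)) z := by
    rw [Module.End.hasEigenvalue_iff_mem_spectrum]
    have hEq : Matrix.toLin' ((M.map (algebraMap ℝ ℂ))ᵀ)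
        = Matrix.toLinAlgEquiv' ((M.map (algebraMap ℝ ℂ))ᵀ) := rfl
    rw [hEq, AlgEquiv.spectrum_eq]
    exact hzT
  obtain ⟨k, hk⟩ := eigenvalue_mem_ball heig
  rw [Metric.mem_closedBall, Complex.dist_eq] at hk
  -- compute radius and center
  have hdiag : M k k = -∑ i ∈ Finset.univ.erase k, M i k := by
    have := hcol k
    rw [← Finset.add_sum_erase _ _ (Finset.mem_univ k)] at this
    linarith
  have hrad : (∑ j ∈ Finset.univ.erase k, ‖((M.map (algebraMap ℝ ℂ))ᵀ) k j‖)
      = -(M k k) := by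
    rw [hdiag, neg_neg]
    refine Finset.sum_congr rfl fun j hj => ?_
    have hjk : j ≠ k := (Finset.mem_erase.mp hj).1
    simp only [Matrix.transpose_apply, Matrix.map_apply]
    rw [show ((algebraMap ℝ ℂ) (M j k)) = ((M j k : ℝ) : ℂ) from rfl]
    rw [Complex.norm_real, Real.norm_eq_abs, abs_of_nonneg (hM j k hjk)]
  have hcenter : ((M.map (algebraMap ℝ ℂ))ᵀ) k k = (M k k : ℂ) := by
    simp [Matrix.transpose_apply, Matrix.map_apply]
  rw [hcenter, hrad] at hk
  set d := M k k with hd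
  have hd0 : d ≤ 0 := by
    have : (0:ℝ) ≤ ∑ i ∈ Finset.univ.erase k, M i k :=
      Finset.sum_nonneg fun i hi => hM i k (Finset.mem_erase.mp hi).1
    rw [hdiag]; linarith
  -- |z - d| ≤ -d
  have hre : z.re - d ≤ ‖z - d‖ := by
    have := Complex.abs_re_le_norm (z - d)
    have h2 : (z - (d:ℂ)).re = z.re - d := by simp
    rw [h2] at this
    exact (le_abs_self _).trans this
  have hre0 : z.re ≤ 0 := by
    have := hre.trans hk
    linarith
  refine ⟨hre0, fun hzero => ?_⟩
  -- Re z = 0: then |z - d|² = (Im z)² + d² ≤ d²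
  have h1 : ‖z - (d:ℂ)‖ ^ 2 ≤ d ^ 2 := by
    nlinarith [norm_nonneg (z - (d:ℂ))]
  rw [Complex.sq_norm, Complex.normSq_apply] at h1
  have him : (z - (d:ℂ)).im = z.im := by simp
  have hre2 : (z - (d:ℂ)).re = -d := by simp [hzero]
  rw [him, hre2] at h1
  have h2 : z.im * z.im ≤ 0 := by nlinarith
  have him0 : z.im = 0 := mul_self_eq_zero.mp (le_antisymm h2 (mul_self_nonneg _))
  exact Complex.ext hzero him0
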